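/- (Black) For every n ≥ 1, the set of all single-peaked linear orders on X_n with respect to the natural axis 1 < 2 < … < n is a maximal Condorcet domain. -/

import Mathlib

/-- A vote (strict linear order) on the set of alternatives `Fin n`, encoded as
the permutation sending each position (`0` = top) to the alternative placed in
that position. -/
abbrev Vote (n : ℕ) := Equiv.Perm (Fin n)

/-- `v` ranks `a` above `b`. -/
def Above {n : ℕ} (v : Vote n) (a b : Fin n) : Prop := v.symm a < v.symm b

instance {n : ℕ} (v : Vote n) (a b : Fin n) : Decidable (Above v a b) :=
  inferInstanceAs (Decidable (v.symm a < v.symm b))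

/-- The majority relation of a list of votes: `a` is ranked above `b` iff more
than half of the votes rank `a` above `b`. -/
def Maj {n : ℕ} (l : List (Vote n)) (a b : Fin n) : Prop :=
  l.length < 2 * l.countP (fun v => decide (Above v a b))

/-- A Condorcet domain: for every odd-length list of votes from `D` the
majority relation is a strict linear order on the alternatives. -/
def IsCondorcet {n : ℕ} (D : Set (Vote n)) : Prop :=
  ∀ l : List (Vote n), Odd l.length → (∀ v ∈ l, v ∈ D) →
    IsStrictTotalOrder (Fin n) (Maj l)

/-- The position (`0` = top) of `x` in the restriction of `v` to the triple
`{a, b, c}`: the number of elements of the triple ranked above `x` by `v`. -/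
def posIn {n : ℕ} (v : Vote n) (a b c x : Fin n) : ℕ :=
  (({a, b, c} : Finset (Fin n)).filter (fun y => Above v y x)).card

/-- The `i`-th smallest element of the triple `a < b < c` (`i : Fin 3`,
0-indexed). -/
def tElem {n : ℕ} (a b c : Fin n) (i : Fin 3) : Fin n :=
  if i = 0 then a else if i = 1 then b else c

/-- The vote `v` satisfies the never condition `iNj` on the triple `a < b < c`
(`i j : Fin 3`, both 0-indexed): the `i`-th smallest element of the triple is
not in the `j`-th position (from the top) of the restriction of `v` to the
triple. -/
def VNever {n : ℕ} (v : Vote n) (a b c : Fin n) (i j : Fin 3) : Prop :=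
  posIn v a b c (tElem a b c i) ≠ (j : ℕ)

/-- The domain `D` satisfies the never condition `iNj` on the triple
`a < b < c` if every vote in `D` does. -/
def DNever {n : ℕ} (D : Set (Vote n)) (a b c : Fin n) (i j : Fin 3) : Prop :=
  ∀ v ∈ D, VNever v a b c i j

/-- A pair (triple, never condition): the triple is `a < b < c` and the
condition is `iNj` (0-indexed). -/
structure NC (n : ℕ) where
  a : Fin n
  b : Fin n
  c : Fin n
  i : Fin 3
  j : Fin 3

/-- The pair is valid: its alternatives do form a triple `a < b < c`. -/
def NC.valid {n : ℕ} (p : NC n) : Prop := p.a < p.b ∧ p.b < p.c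

/-- The vote `v` satisfies the never condition of the pair `p` on its triple. -/
def NC.holdsFor {n : ℕ} (p : NC n) (v : Vote n) : Prop :=
  VNever v p.a p.b p.c p.i p.j

/-- `N(D)`: the set of all pairs (triple, never condition) satisfied by `D`. -/
def NSet {n : ℕ} (D : Set (Vote n)) : Set (NC n) :=
  {p | p.valid ∧ DNever D p.a p.b p.c p.i p.j}

/-- `D` is full: it contains every vote that satisfies, for every pair in
`N(D)`, the corresponding never condition. -/
def IsFull {n : ℕ} (D : Set (Vote n)) : Prop :=
  ∀ v : Vote n, (∀ p ∈ NSet D, p.holdsFor v) → v ∈ D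

/-- `D` is a maximal Condorcet domain: it is a Condorcet domain and no
Condorcet domain strictly contains it. -/
def IsMaximalCD {n : ℕ} (D : Set (Vote n)) : Prop :=
  IsCondorcet D ∧ ∀ D' : Set (Vote n), IsCondorcet D' → ¬ D ⊂ D'

/-- A set `S` of (triple, never condition) pairs implies the never condition
`iNj` on the triple `a < b < c`: every vote satisfying all the conditions in
`S` satisfies `iNj` on this triple. -/
def Implies {n : ℕ} (S : Set (NC n)) (a b c : Fin n) (i j : Fin 3) : Prop :=
  ∀ v : Vote n, (∀ p ∈ S, p.holdsFor v) → VNever v a b c i j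

/-- `N(D)_T`: the set of pairs in `N(D)` whose triple differs from the triple
`(a, b, c)`. -/
def NSetOff {n : ℕ} (D : Set (Vote n)) (a b c : Fin n) : Set (NC n) :=
  {p ∈ NSet D | (p.a, p.b, p.c) ≠ (a, b, c)}

/-- The action of a bijection `π` of the alternatives on a vote: `π(v)` ranks
`x` above `y` iff `v` ranks `π⁻¹ x` above `π⁻¹ y`.  In our encoding this is
the composition `π * v`. -/
def pVote {n : ℕ} (π : Equiv.Perm (Fin n)) (v : Vote n) : Vote n := π * v

/-- `π(D) = {π(v) : v ∈ D}`. -/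
def pDom {n : ℕ} (π : Equiv.Perm (Fin n)) (D : Set (Vote n)) : Set (Vote n) :=
  pVote π '' D

/-- The standard order `α = 1 2 … n` (alternative `k` in position `k`). -/
def stdOrder (n : ℕ) : Vote n := 1

/-- `v` is single-peaked with respect to the natural axis `1 < 2 < … < n`:
letting `p` be the top-ranked alternative of `v`, alternatives below `p` on
the axis are ranked in increasing order and alternatives above `p` are ranked
in decreasing order. -/
def SinglePeaked {n : ℕ} (v : Vote n) : Prop :=
  ∃ p : Fin n, (∀ x : Fin n, x ≠ p → Above v p x) ∧
    (∀ a b : Fin n, a < b → b ≤ p → Above v b a) ∧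
    (∀ a b : Fin n, p ≤ a → a < b → Above v a b)


section Aux

variable {n : ℕ}

lemma above_trichot (v : Vote n) {a b : Fin n} (h : a ≠ b) : Above v a b ∨ Above v b a := by
  have : v.symm a ≠ v.symm b := fun he => h (v.symm.injective he)
  rcases lt_or_gt_of_ne this with h1 | h1
  · exact Or.inl h1
  · exact Or.inr h1

lemma above_asymm (v : Vote n) {a b : Fin n} (h1 : Above v a b) : ¬ Above v b a :=
  fun h2 => absurd (lt_trans h1 h2) (lt_irrefl _)

lemma above_trans (v : Vote n) {a b c : Fin n} (h1 : Above v a b) (h2 : Above v b c) :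
    Above v a c := lt_trans h1 h2

lemma countP_above_add (l : List (Vote n)) {a b : Fin n} (h : a ≠ b) :
    l.countP (fun v => decide (Above v a b)) + l.countP (fun v => decide (Above v b a))
      = l.length := by
  induction l with
  | nil => simp
  | cons v t ih =>
    simp only [List.countP_cons, List.length_cons]
    rcases above_trichot v h with h1 | h1
    · have h2 := above_asymm v h1
      simp [h1, h2]
      omega
    · have h2 := above_asymm v h1
      simp [h1, h2]
      omega

lemma maj_irrefl (l : List (Vote n)) (a : Fin n) : ¬ Maj l a a := by
  intro h
  have h0 : l.countP (fun v => decide (Above v a a)) = 0 :=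
    List.countP_eq_zero.mpr (by intro v _; simp [Above])
  unfold Maj at h; omega

lemma maj_asymm {l : List (Vote n)} {a b : Fin n} (h1 : Maj l a b) : ¬ Maj l b a := by
  intro h2
  by_cases hab : a = b
  · exact maj_irrefl l a (hab ▸ h1)
  · have := countP_above_add l hab
    unfold Maj at h1 h2; omega

lemma maj_total {l : List (Vote n)} (hodd : Odd l.length) {a b : Fin n} (h : a ≠ b) :
    Maj l a b ∨ Maj l b a := by
  obtain ⟨m, hm⟩ := hodd
  have := countP_above_add l h
  unfold Maj; omega

lemma sp_middle {v : Vote n} (hv : SinglePeaked v) {x y z : Fin n}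
    (h1 : x < y) (h2 : y < z) : Above v y x ∨ Above v y z := by
  obtain ⟨p, _, hleft, hright⟩ := hv
  rcases le_total y p with h | h
  · exact Or.inl (hleft x y h1 h)
  · exact Or.inr (hright y z h h2)

lemma cycle_contra {l : List (Vote n)} {m p q : Fin n}
    (hpm : Maj l p m) (hmq : Maj l m q) (hqp : Maj l q p)
    (hmid : ∀ v ∈ l, Above v m p ∨ Above v m q) : False := by
  have hpq : p ≠ q := by
    rintro rfl; exact maj_irrefl l p hqp
  have hc : l.countP (fun v => decide (Above v p m)) ≤
      l.countP (fun v => decide (Above v p q)) := by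
    apply List.countP_mono_left
    intro v hvl hd
    have hpm' : Above v p m := of_decide_eq_true hd
    rcases hmid v hvl with h | h
    · exact absurd h (above_asymm v hpm')
    · exact decide_eq_true (above_trans v hpm' h)
  have := countP_above_add l hpq
  unfold Maj at hpm hqp; omega

lemma maj_trans {l : List (Vote n)} (hl : ∀ v ∈ l, SinglePeaked v) (hodd : Odd l.length)
    {a b c : Fin n} (hab : Maj l a b) (hbc : Maj l b c) : Maj l a c := by
  have hab' : a ≠ b := by rintro rfl; exact maj_irrefl l a hab
  have hbc' : b ≠ c := by rintro rfl; exact maj_irrefl l b hbc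
  have hac' : a ≠ c := by rintro rfl; exact maj_asymm hab hbc
  by_contra hnac
  have hca : Maj l c a := (maj_total hodd hac').resolve_left hnac
  rcases lt_trichotomy a b with h1 | h1 | h1
  · rcases lt_trichotomy c a with h2 | h2 | h2
    · -- c < a < b, median a
      exact cycle_contra hca hab hbc (fun v hv => sp_middle (hl v hv) h2 h1)
    · exact hac' h2.symm
    · rcases lt_trichotomy c b with h3 | h3 | h3
      · -- a < c < b, median c
        exact cycle_contra hbc hca hab (fun v hv => (sp_middle (hl v hv) h2 h3).symm)
      · exact hbc' h3.symm
      · -- a < b < c, median b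
        exact cycle_contra hab hbc hca (fun v hv => sp_middle (hl v hv) h1 h3)
  · exact hab' h1
  · rcases lt_trichotomy c b with h2 | h2 | h2
    · -- c < b < a, median b
      exact cycle_contra hab hbc hca (fun v hv => (sp_middle (hl v hv) h2 h1).symm)
    · exact hbc' h2.symm
    · rcases lt_trichotomy c a with h3 | h3 | h3
      · -- b < c < a, median c
        exact cycle_contra hbc hca hab (fun v hv => sp_middle (hl v hv) h2 h3)
      · exact hac' h3.symm
      · -- b < a < c, median a
        exact cycle_contra hca hab hbc (fun v hv => (sp_middle (hl v hv) h1 h3).symm)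

lemma sp_condorcet : IsCondorcet {v : Vote n | SinglePeaked v} := by
  intro l hodd hmem
  refine { trichotomous := ?_, irrefl := maj_irrefl l, trans := ?_ }
  · intro a b
    by_cases h : a = b
    · exact fun _ _ => h
    · rcases maj_total hodd h with h1 | h1
      · exact fun h2 _ => absurd h1 h2
      · exact fun _ h2 => absurd h1 h2
  · intro a b c hab hbc
    exact maj_trans hmem hodd hab hbc

/-- Build a vote from its rank function. -/
noncomputable def mkVote (f : Fin n → Fin n) (hf : Function.Injective f) : Vote n :=
  (Equiv.ofBijective f (Finite.injective_iff_bijective.mp hf)).symm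

lemma above_mkVote {f : Fin n → Fin n} {hf : Function.Injective f} {x y : Fin n} :
    Above (mkVote f hf) x y ↔ f x < f y := by
  simp [Above, mkVote]

lemma sp_of_forall {v : Vote n} (hn : 1 ≤ n)
    (h : ∀ a b c : Fin n, a < b → b < c → Above v b a ∨ Above v b c) :
    SinglePeaked v := by
  have hsym : v.symm (v ⟨0, hn⟩) = ⟨0, hn⟩ := Equiv.symm_apply_apply v _
  have h0 : ((⟨0, hn⟩ : Fin n)).val = 0 := rfl
  have htop : ∀ x : Fin n, x ≠ v ⟨0, hn⟩ → Above v (v ⟨0, hn⟩) x := by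
    intro x hx
    have hne : v.symm x ≠ ⟨0, hn⟩ := by
      intro he
      apply hx
      have := congrArg v he
      simpa using this
    have hne' : (v.symm x).val ≠ 0 := fun hv0 => hne (Fin.ext (by omega))
    show v.symm (v ⟨0, hn⟩) < v.symm x
    rw [hsym]
    exact Fin.lt_def.mpr (by omega)
  refine ⟨v ⟨0, hn⟩, htop, ?_, ?_⟩
  · intro a b hab hbp
    rcases eq_or_lt_of_le hbp with he | hlt
    · rw [he]
      exact htop a (by rw [← he]; exact ne_of_lt hab)
    · rcases h a b (v ⟨0, hn⟩) hab hlt with h1 | h1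
      · exact h1
      · exfalso
        have h2 : v.symm b < v.symm (v ⟨0, hn⟩) := h1
        rw [hsym] at h2
        have := Fin.lt_def.mp h2
        omega
  · intro a b hpa hab
    rcases eq_or_lt_of_le hpa with he | hlt
    · rw [← he]
      refine htop b ?_
      rw [← he] at hab
      exact (ne_of_lt hab).symm
    · rcases h (v ⟨0, hn⟩) a b hlt hab with h1 | h1
      · exfalso
        have h2 : v.symm a < v.symm (v ⟨0, hn⟩) := h1
        rw [hsym] at h2
        have := Fin.lt_def.mp h2
        omega
      · exact h1

lemma exists_bad_triple {v : Vote n} (hn : 1 ≤ n) (hv : ¬ SinglePeaked v) :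
    ∃ a b c : Fin n, a < b ∧ b < c ∧ Above v a b ∧ Above v c b := by
  by_contra hcon
  push_neg at hcon
  apply hv
  apply sp_of_forall hn
  intro a b c hab hbc
  by_cases h1 : Above v b a
  · exact Or.inl h1
  · have hab' : Above v a b := (above_trichot v (ne_of_lt hab)).resolve_right h1
    by_cases h2 : Above v b c
    · exact Or.inr h2
    · have hcb : Above v c b := (above_trichot v (ne_of_lt hbc).symm).resolve_right
        (fun h => h2 ((above_trichot v (ne_of_lt hbc)).resolve_right (above_asymm v h)))
      exact absurd (hcon a b c hab hbc hab') (fun h => h hcb)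

/-- Rank function of the "peak b, left side first" single-peaked order. -/
def fL (b : Fin n) : Fin n → Fin n := fun x =>
  if x ≤ b then ⟨b.val - x.val, by have := b.isLt; omega⟩ else x

lemma fL_inj (b : Fin n) : Function.Injective (fL b) := by
  intro x y h
  unfold fL at h
  rw [Fin.ext_iff] at h ⊢
  split_ifs at h with h1 h2 h2 <;>
    simp only [Fin.le_def, not_le] at h1 h2 <;> (try simp at h) <;> omega

noncomputable def peakL (b : Fin n) : Vote n := mkVote (fL b) (fL_inj b)

lemma fL_val (b x : Fin n) : (fL b x).val = if x.val ≤ b.val then b.val - x.val else x.val := by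
  unfold fL
  rcases le_or_gt x b with h | h
  · rw [if_pos h, if_pos (Fin.le_def.mp h)]
  · rw [if_neg (not_le.mpr h), if_neg (not_le.mpr (Fin.lt_def.mp h))]

lemma above_peakL {b x y : Fin n} :
    Above (peakL b) x y ↔ (fL b x).val < (fL b y).val := by
  rw [peakL, above_mkVote, Fin.lt_def]

lemma sp_peakL (b : Fin n) : SinglePeaked (peakL b) := by
  refine ⟨b, ?_, ?_, ?_⟩
  · intro x hx
    rw [above_peakL, fL_val, fL_val]
    have : x.val ≠ b.val := fun h => hx (Fin.ext h)
    split_ifs <;> omega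
  · intro a c hac hcb
    rw [above_peakL, fL_val, fL_val]
    have h1 := Fin.lt_def.mp hac
    have h2 := Fin.le_def.mp hcb
    split_ifs <;> omega
  · intro a c hba hac
    rw [above_peakL, fL_val, fL_val]
    have h1 := Fin.le_def.mp hba
    have h2 := Fin.lt_def.mp hac
    have := c.isLt
    split_ifs <;> omega

/-- Rank function of the "peak b, right side first" single-peaked order. -/
def fR (b : Fin n) : Fin n → Fin n := fun x =>
  if b ≤ x then ⟨x.val - b.val, by have := x.isLt; omega⟩
  else ⟨n - 1 - x.val, by have := x.isLt; omega⟩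

lemma fR_inj (b : Fin n) : Function.Injective (fR b) := by
  intro x y h
  unfold fR at h
  rw [Fin.ext_iff] at h ⊢
  have hx := x.isLt
  have hy := y.isLt
  have hb := b.isLt
  split_ifs at h with h1 h2 h2 <;>
    simp only [Fin.le_def, not_le] at h1 h2 <;> (try simp at h) <;> omega

noncomputable def peakR (b : Fin n) : Vote n := mkVote (fR b) (fR_inj b)

lemma fR_val (b x : Fin n) :
    (fR b x).val = if b.val ≤ x.val then x.val - b.val else n - 1 - x.val := by
  unfold fR
  rcases le_or_gt b x with h | h
  · rw [if_pos h, if_pos (Fin.le_def.mp h)]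
  · rw [if_neg (not_le.mpr h), if_neg (not_le.mpr (Fin.lt_def.mp h))]

lemma above_peakR {b x y : Fin n} :
    Above (peakR b) x y ↔ (fR b x).val < (fR b y).val := by
  rw [peakR, above_mkVote, Fin.lt_def]

lemma sp_peakR (b : Fin n) : SinglePeaked (peakR b) := by
  refine ⟨b, ?_, ?_, ?_⟩
  · intro x hx
    rw [above_peakR, fR_val, fR_val]
    have : x.val ≠ b.val := fun h => hx (Fin.ext h)
    have := x.isLt
    have := b.isLt
    split_ifs <;> omega
  · intro a c hac hcb
    rw [above_peakR, fR_val, fR_val]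
    have h1 := Fin.lt_def.mp hac
    have h2 := Fin.le_def.mp hcb
    have := c.isLt
    split_ifs <;> omega
  · intro a c hba hac
    rw [above_peakR, fR_val, fR_val]
    have h1 := Fin.le_def.mp hba
    have h2 := Fin.lt_def.mp hac
    split_ifs <;> omega

lemma above_std {x y : Fin n} : Above (stdOrder n) x y ↔ x < y := by
  simp [Above, stdOrder]
  exact Iff.rfl

lemma sp_std (hn : 1 ≤ n) : SinglePeaked (stdOrder n) := by
  refine ⟨⟨0, hn⟩, ?_, ?_, ?_⟩
  · intro x hx
    rw [above_std, Fin.lt_def]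
    have h0 : ((⟨0, hn⟩ : Fin n)).val = 0 := rfl
    have : x.val ≠ 0 := fun h => hx (Fin.ext (by omega))
    omega
  · intro a b hab hb0
    exfalso
    have := Fin.lt_def.mp hab
    have := Fin.le_def.mp hb0
    have h0 : ((⟨0, hn⟩ : Fin n)).val = 0 := rfl
    omega
  · intro a b _ hab
    rwa [above_std]

lemma above_rev {b : Fin n} (hb : (b : ℕ) = n - 1) {x y : Fin n} (h : x < y) :
    Above (peakR b) y x := by
  rw [above_peakR, fR_val, fR_val]
  have := y.isLt
  have := Fin.lt_def.mp h
  split_ifs <;> omega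

lemma above_peakL_ba {a b : Fin n} (h : a < b) : Above (peakL b) b a := by
  rw [above_peakL, fL_val, fL_val]
  have := Fin.lt_def.mp h
  split_ifs <;> omega

lemma above_peakL_bc {b c : Fin n} (h : b < c) : Above (peakL b) b c := by
  rw [above_peakL, fL_val, fL_val]
  have := Fin.lt_def.mp h
  split_ifs <;> omega

lemma above_peakL_ac {a b c : Fin n} (hab : a < b) (hbc : b < c) :
    Above (peakL b) a c := by
  rw [above_peakL, fL_val, fL_val]
  have := Fin.lt_def.mp hab
  have := Fin.lt_def.mp hbc
  split_ifs <;> omega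

lemma above_peakR_bc {b c : Fin n} (h : b < c) : Above (peakR b) b c := by
  rw [above_peakR, fR_val, fR_val]
  have := Fin.lt_def.mp h
  split_ifs <;> omega

lemma above_peakR_ba {a b : Fin n} (h : a < b) : Above (peakR b) b a := by
  rw [above_peakR, fR_val, fR_val]
  have := Fin.lt_def.mp h
  have := b.isLt
  split_ifs <;> omega

lemma above_peakR_ca {a b c : Fin n} (hab : a < b) (hbc : b < c) :
    Above (peakR b) c a := by
  rw [above_peakR, fR_val, fR_val]
  have := Fin.lt_def.mp hab
  have := Fin.lt_def.mp hbc
  have := c.isLt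
  split_ifs <;> omega

end Aux

/-- (Black) The set of all single-peaked linear orders with respect to the
natural axis is a maximal Condorcet domain. -/

theorem stmt15 {n : ℕ} (hn : 1 ≤ n) :
    IsMaximalCD {v : Vote n | SinglePeaked v} := by
  refine ⟨sp_condorcet, ?_⟩
  intro D' hD' hss
  obtain ⟨v, hvD', hvSP⟩ := Set.exists_of_ssubset hss
  have hsub : {v : Vote n | SinglePeaked v} ⊆ D' := hss.subset
  obtain ⟨a, b, c, hab, hbc, hvab, hvcb⟩ := exists_bad_triple hn hvSP
  have hac : a ≠ c := ne_of_lt (lt_trans hab hbc)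
  have hodd3 : ∀ w1 w2 w3 : Vote n, Odd ([w1, w2, w3].length) := by
    intro w1 w2 w3; exact ⟨1, rfl⟩
  rcases above_trichot v hac with hvac | hvca
  · -- v restricted to the triple is a > c > b
    set u1 : Vote n := peakR ⟨n - 1, by omega⟩ with hu1
    set u2 : Vote n := peakL b with hu2
    set l : List (Vote n) := [v, u1, u2] with hl
    have hmem : ∀ w ∈ l, w ∈ D' := by
      intro w hw
      simp only [hl, List.mem_cons, List.not_mem_nil, or_false] at hw
      rcases hw with rfl | rfl | rfl
      · exact hvD'
      · exact hsub (sp_peakR _)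
      · exact hsub (sp_peakL _)
    have hsto := hD' l (hodd3 v u1 u2) hmem
    haveI : IsStrictTotalOrder (Fin n) (Maj l) := hsto
    have f1 : ¬ Above u1 a c := above_asymm u1 (above_rev (rfl : ((⟨n - 1, by omega⟩ : Fin n) : ℕ) = n - 1) (lt_trans hab hbc))
    have f2 : Above u2 a c := above_peakL_ac hab hbc
    have mac : Maj l a c := by
      simp [hl, Maj, List.countP_cons, hvac, f1, f2]
    have f3 : Above u1 c b := above_rev (rfl : ((⟨n - 1, by omega⟩ : Fin n) : ℕ) = n - 1) hbc
    have f4 : ¬ Above u2 c b := above_asymm u2 (above_peakL_bc hbc)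
    have mcb : Maj l c b := by
      simp [hl, Maj, List.countP_cons, hvcb, f3, f4]
    have f5 : ¬ Above v b a := above_asymm v hvab
    have f6 : Above u1 b a := above_rev (rfl : ((⟨n - 1, by omega⟩ : Fin n) : ℕ) = n - 1) hab
    have f7 : Above u2 b a := above_peakL_ba hab
    have mba : Maj l b a := by
      simp [hl, Maj, List.countP_cons, f5, f6, f7]
    exact irrefl_of (Maj l) a
      (trans_of (Maj l) (trans_of (Maj l) mac mcb) mba)
  · -- v restricted to the triple is c > a > b
    set u1 : Vote n := stdOrder n with hu1
    set u2 : Vote n := peakR b with hu2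
    set l : List (Vote n) := [v, u1, u2] with hl
    have hmem : ∀ w ∈ l, w ∈ D' := by
      intro w hw
      simp only [hl, List.mem_cons, List.not_mem_nil, or_false] at hw
      rcases hw with rfl | rfl | rfl
      · exact hvD'
      · exact hsub (sp_std hn)
      · exact hsub (sp_peakR _)
    have hsto := hD' l (hodd3 v u1 u2) hmem
    haveI : IsStrictTotalOrder (Fin n) (Maj l) := hsto
    have f1 : ¬ Above u1 c a := by
      rw [hu1, above_std]; exact fun h => absurd (lt_trans hab hbc) (asymm h)
    have f2 : Above u2 c a := above_peakR_ca hab hbc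
    have mca : Maj l c a := by
      simp [hl, Maj, List.countP_cons, hvca, f1, f2]
    have f3 : Above u1 a b := above_std.mpr hab
    have f4 : ¬ Above u2 a b := above_asymm u2 (above_peakR_ba hab)
    have mab : Maj l a b := by
      simp [hl, Maj, List.countP_cons, hvab, f3, f4]
    have f5 : ¬ Above v b c := above_asymm v hvcb
    have f6 : Above u1 b c := above_std.mpr hbc
    have f7 : Above u2 b c := above_peakR_bc hbc
    have mbc : Maj l b c := by
      simp [hl, Maj, List.countP_cons, f5, f6, f7]
    exact irrefl_of (Maj l) c
      (trans_of (Maj l) (trans_of (Maj l) mca mab) mbc)
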